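/- For all a, b > 0 and 0 ≤ t ≤ 1, one has a + b ≤ ((a+b)/(2√(ab)))^{4t(1-t)} · (a^t b^{1-t} + a^{1-t} b^t). -/

import Mathlib

open Real

-- L1: sinh x ≤ x * cosh x for x ≥ 0
lemma aux_sinh_le (x : ℝ) (hx : 0 ≤ x) : Real.sinh x ≤ x * Real.cosh x := by
  have key : MonotoneOn (fun x : ℝ => x * Real.cosh x - Real.sinh x) (Set.Ici 0) := by
    apply monotoneOn_of_deriv_nonneg (convex_Ici 0)
    · fun_prop
    · intro y _
      exact (((hasDerivAt_id y).mul (Real.hasDerivAt_cosh y)).sub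
        (Real.hasDerivAt_sinh y)).differentiableAt.differentiableWithinAt
    · intro y hy
      rw [interior_Ici] at hy
      have hd : HasDerivAt (fun x : ℝ => x * Real.cosh x - Real.sinh x)
          (1 * Real.cosh y + y * Real.sinh y - Real.cosh y) y :=
        ((hasDerivAt_id y).mul (Real.hasDerivAt_cosh y)).sub (Real.hasDerivAt_sinh y)
      rw [hd.deriv]
      have : 0 ≤ Real.sinh y := Real.sinh_nonneg_iff.2 (le_of_lt hy)
      nlinarith [(le_of_lt hy : 0 ≤ y)]
  have := key (Set.self_mem_Ici) (Set.mem_Ici.2 hx) hx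
  simp at this
  linarith

-- L2: sinh x / x is monotone: for 0 ≤ B ≤ A, A * sinh B ≤ B * sinh A
lemma aux_sinh_div (B A : ℝ) (hB : 0 ≤ B) (hBA : B ≤ A) :
    A * Real.sinh B ≤ B * Real.sinh A := by
  have key : MonotoneOn (fun x : ℝ => B * Real.sinh x - x * Real.sinh B) (Set.Ici B) := by
    apply monotoneOn_of_deriv_nonneg (convex_Ici B)
    · fun_prop
    · intro y _
      exact (((Real.hasDerivAt_sinh y).const_mul B).sub
        ((hasDerivAt_id y).mul_const (Real.sinh B))).differentiableAt.differentiableWithinAt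
    · intro y hy
      rw [interior_Ici] at hy
      have hd : HasDerivAt (fun x : ℝ => B * Real.sinh x - x * Real.sinh B)
          (B * Real.cosh y - 1 * Real.sinh B) y :=
        ((Real.hasDerivAt_sinh y).const_mul B).sub ((hasDerivAt_id y).mul_const (Real.sinh B))
      rw [hd.deriv]
      have h1 : Real.cosh B ≤ Real.cosh y := by
        rw [Real.cosh_le_cosh]
        rw [abs_of_nonneg hB, abs_of_nonneg (hB.trans (le_of_lt hy))]
        exact le_of_lt hy
      have h2 : Real.sinh B ≤ B * Real.cosh B := aux_sinh_le B hB
      nlinarith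
  have := key (Set.self_mem_Ici) (Set.mem_Ici.2 hBA) hBA
  simp at this
  linarith

-- L3: concavity of tanh: r * sinh s * cosh (r*s) ≤ sinh (r*s) * cosh s, for s ≥ 0, r ∈ [0,1]
lemma aux_tanh_concave (r s : ℝ) (hr0 : 0 ≤ r) (hr1 : r ≤ 1) (hs : 0 ≤ s) :
    r * Real.sinh s * Real.cosh (r * s) ≤ Real.sinh (r * s) * Real.cosh s := by
  have key := aux_sinh_div ((1 - r) * s) ((1 + r) * s)
    (mul_nonneg (by linarith) hs) (by nlinarith)
  have e1 : (1 + r) * s = s + r * s := by ring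
  have e2 : (1 - r) * s = s - r * s := by ring
  rw [e1, e2, Real.sinh_add, Real.sinh_sub] at key
  rcases eq_or_lt_of_le hs with h | h
  · simp [← h]
  · nlinarith [key, h]

-- L4: r^2 * log (cosh u) ≤ log (cosh (r * u)) for u ≥ 0, r ∈ [0,1]
lemma aux_log_cosh (r u : ℝ) (hr0 : 0 ≤ r) (hr1 : r ≤ 1) (hu : 0 ≤ u) :
    r ^ 2 * Real.log (Real.cosh u) ≤ Real.log (Real.cosh (r * u)) := by
  have hd : ∀ x : ℝ, HasDerivAt
      (fun x => Real.log (Real.cosh (r * x)) - r ^ 2 * Real.log (Real.cosh x))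
      (Real.sinh (r * x) * r / Real.cosh (r * x) - r ^ 2 * (Real.sinh x / Real.cosh x)) x := by
    intro x
    have h1 : HasDerivAt (fun x : ℝ => r * x) r x := by
      simpa using (hasDerivAt_id x).const_mul r
    have h2 : HasDerivAt (fun x : ℝ => Real.cosh (r * x)) (Real.sinh (r * x) * r) x :=
      (Real.hasDerivAt_cosh (r * x)).comp x h1
    have h3 := h2.log (Real.cosh_pos (r * x)).ne'
    have h4 := ((Real.hasDerivAt_cosh x).log (Real.cosh_pos x).ne').const_mul (r ^ 2)
    exact h3.sub h4
  have key : MonotoneOn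
      (fun x => Real.log (Real.cosh (r * x)) - r ^ 2 * Real.log (Real.cosh x)) (Set.Ici 0) := by
    apply monotoneOn_of_deriv_nonneg (convex_Ici 0)
    · exact (Continuous.continuousOn (by fun_prop (disch := intro x; exact (Real.cosh_pos _).ne')))
    · intro y _
      exact (hd y).differentiableAt.differentiableWithinAt
    · intro y hy
      rw [interior_Ici] at hy
      rw [(hd y).deriv]
      rw [sub_nonneg, mul_div_assoc',
        div_le_div_iff₀ (Real.cosh_pos y) (Real.cosh_pos (r * y))]
      have := aux_tanh_concave r y hr0 hr1 (le_of_lt hy)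
      nlinarith [this, hr0]
  have := key (Set.self_mem_Ici) (Set.mem_Ici.2 hu) hu
  simp at this
  linarith

-- L5: cosh u ^ (r^2) ≤ cosh (r * u)
lemma aux_cosh_rpow (r u : ℝ) (hr0 : 0 ≤ r) (hr1 : r ≤ 1) (hu : 0 ≤ u) :
    Real.cosh u ^ ((r ^ 2 : ℝ)) ≤ Real.cosh (r * u) := by
  rw [← Real.exp_log (Real.cosh_pos (r * u)), Real.rpow_def_of_pos (Real.cosh_pos u)]
  exact Real.exp_le_exp.2 (by rw [mul_comm]; exact aux_log_cosh r u hr0 hr1 hu)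

theorem multiplicative_reverse_heinz (a b t : ℝ) (ha : 0 < a) (hb : 0 < b)
    (ht0 : 0 ≤ t) (ht1 : t ≤ 1) :
    a + b ≤ ((a + b) / (2 * Real.sqrt (a * b))) ^ (4 * t * (1 - t))
      * (a ^ t * b ^ (1 - t) + a ^ (1 - t) * b ^ t) := by
  set A := Real.log a with hA
  set B := Real.log b with hB
  set m := (A + B) / 2 with hm
  set u := (A - B) / 2 with hu
  set r := 2 * t - 1 with hr
  have hea : a = Real.exp A := (Real.exp_log ha).symm
  have heb : b = Real.exp B := (Real.exp_log hb).symm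
  have hsqrt : Real.sqrt (a * b) = Real.exp m := by
    rw [show a * b = (Real.exp m) ^ 2 by
      rw [hea, heb, ← Real.exp_add, sq, ← Real.exp_add]; ring_nf; rw [hm]; ring_nf]
    exact Real.sqrt_sq (Real.exp_pos m).le
  have hab : a + b = 2 * Real.exp m * Real.cosh u := by
    have h1 : A = m + u := by rw [hm, hu]; ring
    have h2 : B = m + -u := by rw [hm, hu]; ring
    rw [hea, heb, Real.cosh_eq, h1, h2, Real.exp_add, Real.exp_add]
    ring
  have hat : a ^ t * b ^ (1 - t) = Real.exp (m + r * u) := by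
    rw [Real.rpow_def_of_pos ha, Real.rpow_def_of_pos hb, ← Real.exp_add, ← hA, ← hB]
    congr 1; rw [hm, hu, hr]; ring
  have hat2 : a ^ (1 - t) * b ^ t = Real.exp (m - r * u) := by
    rw [Real.rpow_def_of_pos ha, Real.rpow_def_of_pos hb, ← Real.exp_add, ← hA, ← hB]
    congr 1; rw [hm, hu, hr]; ring
  have hsum : a ^ t * b ^ (1 - t) + a ^ (1 - t) * b ^ t
      = 2 * Real.exp m * Real.cosh (r * u) := by
    have h1 : m - r * u = m + -(r * u) := by ring
    rw [hat, hat2, Real.cosh_eq, h1, Real.exp_add, Real.exp_add]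
    ring
  have hK : (a + b) / (2 * Real.sqrt (a * b)) = Real.cosh u := by
    rw [hab, hsqrt]
    field_simp
  have hexp : 4 * t * (1 - t) = 1 - r ^ 2 := by rw [hr]; ring
  rw [hK, hab, hsum, hexp]
  -- now: 2 * exp m * cosh u ≤ cosh u ^ (1 - r^2) * (2 * exp m * cosh (r*u))
  have hc1 : (1 : ℝ) ≤ Real.cosh u := Real.one_le_cosh u
  have hcpos : 0 < Real.cosh u := Real.cosh_pos u
  have key : Real.cosh u ^ ((r ^ 2 : ℝ)) ≤ Real.cosh (r * u) := by
    have h1 : Real.cosh u = Real.cosh |u| := by rw [Real.cosh_abs]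
    have h2 : Real.cosh (r * u) = Real.cosh (|r| * |u|) := by
      rw [← abs_mul, Real.cosh_abs]
    have h3 : (r : ℝ) ^ 2 = |r| ^ 2 := (sq_abs r).symm
    rw [h1, h2, h3]
    exact aux_cosh_rpow |r| |u| (abs_nonneg r)
      (by rw [hr, abs_le]; constructor <;> linarith) (abs_nonneg u)
  calc 2 * Real.exp m * Real.cosh u
      = Real.cosh u ^ ((1 : ℝ) - r ^ 2) * (2 * Real.exp m * Real.cosh u ^ ((r ^ 2 : ℝ))) := by
        have hcomb : Real.cosh u ^ ((1 : ℝ) - r ^ 2) * Real.cosh u ^ ((r ^ 2 : ℝ))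
            = Real.cosh u := by
          rw [← Real.rpow_add hcpos]; norm_num
        rw [show Real.cosh u ^ ((1 : ℝ) - r ^ 2) * (2 * Real.exp m * Real.cosh u ^ ((r ^ 2 : ℝ)))
            = 2 * Real.exp m * (Real.cosh u ^ ((1 : ℝ) - r ^ 2) * Real.cosh u ^ ((r ^ 2 : ℝ)))
          from by ring, hcomb]
    _ ≤ Real.cosh u ^ ((1 : ℝ) - r ^ 2) * (2 * Real.exp m * Real.cosh (r * u)) := by
        apply mul_le_mul_of_nonneg_left _ (Real.rpow_nonneg hcpos.le _)
        apply mul_le_mul_of_nonneg_left key (by positivity)
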